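/- For every Miller tree p and every infinite S ⊆ ω there is a Miller subtree q ≤ p such that either [q]_split ⊆ [S]^ω or [q]_split ⊆ [ω∖S]^ω. -/

import Mathlib

/-- The restriction `f↾n` of `f : ω → ω`, as a finite sequence. -/
def res (f : ℕ → ℕ) (n : ℕ) : List ℕ := (List.range n).map f

/-- A tree on `ω`: a set of finite sequences closed under initial segments. -/
def IsTree (T : Set (List ℕ)) : Prop := ∀ s ∈ T, ∀ t, t <+: s → t ∈ T

/-- The successor set `suc_T(s) = {n : s⌢n ∈ T}`. -/
def sucT (T : Set (List ℕ)) (s : List ℕ) : Set ℕ := {n | s ++ [n] ∈ T}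

/-- `f ∈ [T]` is a branch of `T`. -/
def IsBranch (T : Set (List ℕ)) (f : ℕ → ℕ) : Prop := ∀ n, res f n ∈ T

/-- A Miller (superperfect) tree: a nonempty tree of strictly increasing sequences in
which every node extends to an infinitely-splitting node. -/
def IsMiller (p : Set (List ℕ)) : Prop :=
  p.Nonempty ∧ IsTree p ∧ (∀ s ∈ p, List.Chain' (· < ·) s) ∧
    ∀ s ∈ p, ∃ t ∈ p, s <+: t ∧ (sucT p t).Infinite

/-- The (infinitely-)splitting nodes of `p`. -/
def SplitNodes (p : Set (List ℕ)) : Set (List ℕ) := {s | s ∈ p ∧ (sucT p s).Infinite}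

/-- `Sp(p,f) = {f(n) : f↾n ∈ Split(p)}`. -/
def Sp (p : Set (List ℕ)) (f : ℕ → ℕ) : Set ℕ :=
  {m | ∃ n, res f n ∈ SplitNodes p ∧ f n = m}

/-- `[p]_split = {Sp(p,f) : f ∈ [p]}`. -/
def splitSets (p : Set (List ℕ)) : Set (Set ℕ) := {X | ∃ f, IsBranch p f ∧ X = Sp p f}

namespace Stmt10

/-- Good nodes: in `p` with infinitely many successors inside `S'`. -/
def Gd (p : Set (List ℕ)) (S' : Set ℕ) (t : List ℕ) : Prop :=
  t ∈ p ∧ (sucT p t ∩ S').Infinite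

open Classical in
/-- A minimal-length good extension of `s`. -/
noncomputable def extn (p : Set (List ℕ)) (S' : Set ℕ) (s : List ℕ) : List ℕ :=
  if h : ∃ n, ∃ t, Gd p S' t ∧ s <+: t ∧ t.length = n then
    Classical.choose (Nat.find_spec h)
  else s

theorem extn_spec {p : Set (List ℕ)} {S' : Set ℕ} {s : List ℕ}
    (h : ∃ t, Gd p S' t ∧ s <+: t) :
    Gd p S' (extn p S' s) ∧ s <+: extn p S' s ∧
      ∀ t, Gd p S' t → s <+: t → (extn p S' s).length ≤ t.length := by
  classical
  obtain ⟨t, ht, hst⟩ := h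
  have h' : ∃ n, ∃ t, Gd p S' t ∧ s <+: t ∧ t.length = n := ⟨t.length, t, ht, hst, rfl⟩
  have he : extn p S' s = Classical.choose (Nat.find_spec h') := by
    rw [extn, dif_pos h']
  obtain ⟨hg, hpre, hlen⟩ := Classical.choose_spec (Nat.find_spec h')
  rw [he]
  refine ⟨hg, hpre, ?_⟩
  intro u hu hsu
  rw [hlen]
  exact Nat.find_min' h' ⟨u, hu, hsu, rfl⟩

open Classical in
/-- Enumeration of `sucT p t ∩ S'`. -/
noncomputable def en (p : Set (List ℕ)) (S' : Set ℕ) (t : List ℕ) (k : ℕ) : ℕ :=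
  if h : (sucT p t ∩ S').Infinite then ((Set.Infinite.natEmbedding _ h) k : ℕ) else 0

theorem en_mem {p : Set (List ℕ)} {S' : Set ℕ} {t : List ℕ}
    (h : (sucT p t ∩ S').Infinite) (k : ℕ) : en p S' t k ∈ sucT p t ∩ S' := by
  rw [en, dif_pos h]; exact ((Set.Infinite.natEmbedding _ h) k).2

theorem en_inj {p : Set (List ℕ)} {S' : Set ℕ} {t : List ℕ}
    (h : (sucT p t ∩ S').Infinite) {k k' : ℕ} (hkk : en p S' t k = en p S' t k') :
    k = k' := by
  simp only [en, dif_pos h] at hkk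
  exact (Set.Infinite.natEmbedding _ h).injective (Subtype.ext hkk)

/-- The skeleton: addresses (lists read with newest coordinate at the head) to nodes. -/
noncomputable def sig (p : Set (List ℕ)) (S' : Set ℕ) : List ℕ → List ℕ
  | [] => extn p S' []
  | k :: a => extn p S' (sig p S' a ++ [en p S' (sig p S' a) k])

/-- The resulting tree. -/
def qt (p : Set (List ℕ)) (S' : Set ℕ) : Set (List ℕ) :=
  {s | ∃ b, s <+: sig p S' b}

section Main

variable {p : Set (List ℕ)} {S' : Set ℕ}

theorem sig_good (hnil : [] ∈ p) (htree : IsTree p)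
    (H : ∀ s ∈ p, ∃ t ∈ p, s <+: t ∧ (sucT p t ∩ S').Infinite) :
    ∀ a, Gd p S' (sig p S' a) := by
  intro a
  induction a with
  | nil =>
    obtain ⟨t, ht, hst, hinf⟩ := H [] hnil
    exact (extn_spec ⟨t, ⟨ht, hinf⟩, hst⟩).1
  | cons k a ih =>
    have hmem : sig p S' a ++ [en p S' (sig p S' a) k] ∈ p := (en_mem ih.2 k).1
    obtain ⟨t, ht, hst, hinf⟩ := H _ hmem
    exact (extn_spec ⟨t, ⟨ht, hinf⟩, hst⟩).1

theorem sig_step (hnil : [] ∈ p) (htree : IsTree p)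
    (H : ∀ s ∈ p, ∃ t ∈ p, s <+: t ∧ (sucT p t ∩ S').Infinite) (a : List ℕ) (k : ℕ) :
    sig p S' a ++ [en p S' (sig p S' a) k] <+: sig p S' (k :: a) := by
  have ih := sig_good hnil htree H a
  have hmem : sig p S' a ++ [en p S' (sig p S' a) k] ∈ p := (en_mem ih.2 k).1
  obtain ⟨t, ht, hst, hinf⟩ := H _ hmem
  exact (extn_spec ⟨t, ⟨ht, hinf⟩, hst⟩).2.1

theorem sig_mono (hnil : [] ∈ p) (htree : IsTree p)
    (H : ∀ s ∈ p, ∃ t ∈ p, s <+: t ∧ (sucT p t ∩ S').Infinite) :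
    ∀ {a b : List ℕ}, a <:+ b → sig p S' a <+: sig p S' b := by
  intro a b hab
  induction b with
  | nil => rw [List.suffix_nil.mp hab]
  | cons k b ih =>
    rcases List.suffix_cons_iff.mp hab with h | h
    · rw [h]
    · exact ((ih h).trans (List.prefix_append _ _)).trans (sig_step hnil htree H b k)

theorem sig_len_lt (hnil : [] ∈ p) (htree : IsTree p)
    (H : ∀ s ∈ p, ∃ t ∈ p, s <+: t ∧ (sucT p t ∩ S').Infinite) (a : List ℕ) (k : ℕ) :
    (sig p S' a).length < (sig p S' (k :: a)).length := by
  have := (sig_step hnil htree H a k).length_le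
  simp only [List.length_append, List.length_cons, List.length_nil] at this
  omega

/-- Key pushing lemma: any strictly longer skeleton node above `sig a` goes through
`sig (k :: a)` for some `k`. -/
theorem push (hnil : [] ∈ p) (htree : IsTree p)
    (H : ∀ s ∈ p, ∃ t ∈ p, s <+: t ∧ (sucT p t ∩ S').Infinite) :
    ∀ (b a : List ℕ), sig p S' a <+: sig p S' b → sig p S' a ≠ sig p S' b →
      ∃ k, sig p S' a ++ [en p S' (sig p S' a) k] <+: sig p S' b ∧
        sig p S' (k :: a) <+: sig p S' b := by
  intro b
  induction b with
  | nil =>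
    intro a hab hne
    exact absurd (hab.eq_of_length (le_antisymm hab.length_le
      (sig_mono hnil htree H List.nil_suffix).length_le)) hne
  | cons k0 c ih =>
    intro a hab hne
    have hc : sig p S' c <+: sig p S' (k0 :: c) :=
      (List.prefix_append _ _).trans (sig_step hnil htree H c k0)
    by_cases heq : sig p S' a = sig p S' c
    · refine ⟨k0, ?_, ?_⟩
      · rw [heq]; exact sig_step hnil htree H c k0
      · show extn p S' (sig p S' a ++ [en p S' (sig p S' a) k0]) <+: _
        rw [heq]; exact List.prefix_refl _
    rcases List.prefix_or_prefix_of_prefix hab hc with hac | hca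
    · obtain ⟨k, h1, h2⟩ := ih a hac heq
      exact ⟨k, h1.trans hc, h2.trans hc⟩
    · -- sig c is a proper prefix of sig a : impossible by minimality of extn
      exfalso
      have hlt : (sig p S' c).length < (sig p S' a).length :=
        lt_of_le_of_ne hca.length_le (fun h => (Ne.symm heq) (hca.eq_of_length h))
      have h1 : sig p S' c ++ [en p S' (sig p S' c) k0] <+: sig p S' (k0 :: c) :=
        sig_step hnil htree H c k0
      have h2 : sig p S' c ++ [en p S' (sig p S' c) k0] <+: sig p S' a :=
        List.prefix_of_prefix_length_le h1 hab (by simp; omega)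
      have hga := sig_good hnil htree H a
      -- minimality of extn at sig (k0 :: c)
      have hmem : sig p S' c ++ [en p S' (sig p S' c) k0] ∈ p :=
        (en_mem (sig_good hnil htree H c).2 k0).1
      obtain ⟨t, ht, hst, hinf⟩ := H _ hmem
      have hmin := (extn_spec ⟨t, ⟨ht, hinf⟩, hst⟩).2.2 (sig p S' a) hga h2
      have : (sig p S' (k0 :: c)).length ≤ (sig p S' a).length := hmin
      have hlt2 : (sig p S' a).length < (sig p S' (k0 :: c)).length :=
        lt_of_le_of_ne hab.length_le (fun h => hne (hab.eq_of_length h))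
      omega

theorem mem_qt_self (a : List ℕ) : sig p S' a ∈ qt p S' := ⟨a, List.prefix_refl _⟩

theorem qt_sub (htree : IsTree p) (hnil : [] ∈ p)
    (H : ∀ s ∈ p, ∃ t ∈ p, s <+: t ∧ (sucT p t ∩ S').Infinite) : qt p S' ⊆ p := by
  rintro s ⟨b, hb⟩
  exact htree _ (sig_good hnil htree H b).1 _ hb

theorem suc_qt (hnil : [] ∈ p) (htree : IsTree p)
    (H : ∀ s ∈ p, ∃ t ∈ p, s <+: t ∧ (sucT p t ∩ S').Infinite) (a : List ℕ) {n : ℕ}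
    (hn : n ∈ sucT (qt p S') (sig p S' a)) : ∃ k, n = en p S' (sig p S' a) k := by
  obtain ⟨b, hb⟩ := hn
  have hab : sig p S' a <+: sig p S' b := (List.prefix_append _ _).trans hb
  have hne : sig p S' a ≠ sig p S' b := by
    intro h
    have := hb.length_le
    rw [← h] at this
    simp at this
  obtain ⟨k, h1, h2⟩ := push hnil htree H b a hab hne
  have heq : sig p S' a ++ [n] = sig p S' a ++ [en p S' (sig p S' a) k] :=
    (List.prefix_of_prefix_length_le hb h1 (by simp)).eq_of_length (by simp)
  exact ⟨k, by simpa using (List.append_inj heq rfl).2⟩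

theorem suc_qt_mem (hnil : [] ∈ p) (htree : IsTree p)
    (H : ∀ s ∈ p, ∃ t ∈ p, s <+: t ∧ (sucT p t ∩ S').Infinite) (a : List ℕ) (k : ℕ) :
    en p S' (sig p S' a) k ∈ sucT (qt p S') (sig p S' a) :=
  ⟨k :: a, sig_step hnil htree H a k⟩

theorem suc_qt_infinite (hnil : [] ∈ p) (htree : IsTree p)
    (H : ∀ s ∈ p, ∃ t ∈ p, s <+: t ∧ (sucT p t ∩ S').Infinite) (a : List ℕ) :
    (sucT (qt p S') (sig p S' a)).Infinite := by
  apply Set.infinite_of_injective_forall_mem (f := fun k => en p S' (sig p S' a) k)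
  · intro k k' hkk
    exact en_inj (sig_good hnil htree H a).2 hkk
  · intro k
    exact suc_qt_mem hnil htree H a k

theorem suc_qt_sub (hnil : [] ∈ p) (htree : IsTree p)
    (H : ∀ s ∈ p, ∃ t ∈ p, s <+: t ∧ (sucT p t ∩ S').Infinite) (a : List ℕ) :
    sucT (qt p S') (sig p S' a) ⊆ S' := by
  intro n hn
  obtain ⟨k, rfl⟩ := suc_qt hnil htree H a hn
  exact (en_mem (sig_good hnil htree H a).2 k).2

theorem qt_miller (hnil : [] ∈ p) (htree : IsTree p)
    (hchain : ∀ s ∈ p, List.Chain' (· < ·) s)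
    (H : ∀ s ∈ p, ∃ t ∈ p, s <+: t ∧ (sucT p t ∩ S').Infinite) : IsMiller (qt p S') := by
  refine ⟨⟨[], ⟨[], List.nil_prefix⟩⟩, ?_, ?_, ?_⟩
  · rintro s ⟨b, hb⟩ t hts
    exact ⟨b, hts.trans hb⟩
  · intro s hs
    exact hchain s (qt_sub htree hnil H hs)
  · rintro s ⟨b, hb⟩
    exact ⟨sig p S' b, mem_qt_self b, hb, suc_qt_infinite hnil htree H b⟩

/-- Splitting nodes of `qt` are exactly skeleton nodes. -/
theorem split_ran (hnil : [] ∈ p) (htree : IsTree p)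
    (H : ∀ s ∈ p, ∃ t ∈ p, s <+: t ∧ (sucT p t ∩ S').Infinite) {s : List ℕ}
    (hs : s ∈ qt p S') (hinf : (sucT (qt p S') s).Infinite) : ∃ a, sig p S' a = s := by
  classical
  by_contra hno
  push_neg at hno
  obtain ⟨b, hb⟩ := hs
  -- show sucT (qt p S') s is a subsingleton
  suffices hss : Set.Subsingleton (sucT (qt p S') s) by
    exact hinf hss.finite
  by_cases hsh : (sig p S' []).length ≤ s.length
  · -- sig [] <+: s
    have h0b : sig p S' [] <+: sig p S' b := sig_mono hnil htree H List.nil_suffix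
    have h0s : sig p S' [] <+: s := List.prefix_of_prefix_length_le h0b hb hsh
    set P : ℕ → Prop := fun l => ∃ a, (sig p S' a).length = l ∧ sig p S' a <+: s with hP
    have hP0 : P (sig p S' []).length := ⟨[], rfl, h0s⟩
    set L := Nat.findGreatest P s.length with hL
    have hPL : P L := Nat.findGreatest_spec hsh hP0
    obtain ⟨a, hLa, has⟩ := hPL
    have hsa : sig p S' a ≠ s := hno a
    have hlt : (sig p S' a).length < s.length :=
      lt_of_le_of_ne has.length_le (fun h => hsa (has.eq_of_length h))
    have hasb : sig p S' a <+: sig p S' b := has.trans hb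
    have hneb : sig p S' a ≠ sig p S' b := by
      intro h; rw [h] at hlt; exact absurd hb.length_le (by omega)
    obtain ⟨k, h1, h2⟩ := push hnil htree H b a hasb hneb
    have hes : sig p S' a ++ [en p S' (sig p S' a) k] <+: s :=
      List.prefix_of_prefix_length_le h1 hb (by simp; omega)
    have hnks : ¬ sig p S' (k :: a) <+: s := by
      intro hk
      have hlek : (sig p S' (k :: a)).length ≤ L :=
        Nat.le_findGreatest hk.length_le ⟨k :: a, rfl, hk⟩
      have := sig_len_lt hnil htree H a k
      omega
    -- s is a proper prefix of sig (k :: a)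
    have hskk : s <+: sig p S' (k :: a) := by
      rcases List.prefix_or_prefix_of_prefix hb h2 with h | h
      · exact h
      · exact absurd h hnks
    have hslt : s.length < (sig p S' (k :: a)).length :=
      lt_of_le_of_ne hskk.length_le (fun h => hno (k :: a) (hskk.eq_of_length h).symm)
    -- every successor equals the entry of sig (k :: a) at position s.length
    have key : ∀ n ∈ sucT (qt p S') s, s ++ [n] <+: sig p S' (k :: a) := by
      rintro n ⟨b', hb'⟩
      have hab' : sig p S' a <+: sig p S' b' :=
        (has.trans (List.prefix_append _ _)).trans hb'
      have hne' : sig p S' a ≠ sig p S' b' := by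
        intro h
        have := hb'.length_le
        rw [← h] at this
        simp at this; omega
      obtain ⟨k', h1', h2'⟩ := push hnil htree H b' a hab' hne'
      -- the entry of s (hence of sig b') right after sig a is en k, so k' = k
      have hesb' : sig p S' a ++ [en p S' (sig p S' a) k] <+: sig p S' b' :=
        (hes.trans (List.prefix_append _ _)).trans hb'
      have hkeq : en p S' (sig p S' a) k' = en p S' (sig p S' a) k := by
        have := (List.prefix_of_prefix_length_le h1' hesb' (by simp)).eq_of_length (by simp)
        simpa using (List.append_inj this rfl).2
      have hk'k : k' = k := en_inj (sig_good hnil htree H a).2 hkeq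
      rw [hk'k] at h2'
      exact List.prefix_of_prefix_length_le hb' h2' (by simp; omega)
    intro n hn m hm
    have h1 := key n hn
    have h2 := key m hm
    have := (List.prefix_of_prefix_length_le h1 h2 (by simp)).eq_of_length (by simp)
    simpa using (List.append_inj this rfl).2
  · -- s is a proper prefix of sig []
    push_neg at hsh
    have key : ∀ n ∈ sucT (qt p S') s, s ++ [n] <+: sig p S' [] := by
      rintro n ⟨b', hb'⟩
      have h0b' : sig p S' [] <+: sig p S' b' := sig_mono hnil htree H List.nil_suffix
      exact List.prefix_of_prefix_length_le hb' h0b' (by simp; omega)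
    intro n hn m hm
    have h1 := key n hn
    have h2 := key m hm
    have := (List.prefix_of_prefix_length_le h1 h2 (by simp)).eq_of_length (by simp)
    simpa using (List.append_inj this rfl).2


theorem res_length (f : ℕ → ℕ) (n : ℕ) : (res f n).length = n := by simp [res]

theorem res_succ (f : ℕ → ℕ) (n : ℕ) : res f (n + 1) = res f n ++ [f n] := by
  simp [res, List.range_succ]

theorem res_prefix (f : ℕ → ℕ) {m n : ℕ} (h : m ≤ n) : res f m <+: res f n := by
  refine List.IsPrefix.map f ?_
  exact List.prefix_iff_eq_take.mpr (by simp [List.take_range, h])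

theorem branch_base (hnil : [] ∈ p) (htree : IsTree p)
    (H : ∀ s ∈ p, ∃ t ∈ p, s <+: t ∧ (sucT p t ∩ S').Infinite) {f : ℕ → ℕ}
    (hf : IsBranch (qt p S') f) : res f (sig p S' []).length = sig p S' [] := by
  obtain ⟨b, hb⟩ := hf (sig p S' []).length
  have h0b : sig p S' [] <+: sig p S' b := sig_mono hnil htree H List.nil_suffix
  exact (List.prefix_of_prefix_length_le hb h0b (by simp [res_length])).eq_of_length
    (by simp [res_length])

theorem branch_step (hnil : [] ∈ p) (htree : IsTree p)
    (H : ∀ s ∈ p, ∃ t ∈ p, s <+: t ∧ (sucT p t ∩ S').Infinite) {f : ℕ → ℕ}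
    (hf : IsBranch (qt p S') f) {m : ℕ} {a : List ℕ} (hm : res f m = sig p S' a) :
    ∃ m' a', m < m' ∧ res f m' = sig p S' a' := by
  have hml : m = (sig p S' a).length := by rw [← hm, res_length]
  obtain ⟨b, hb⟩ := hf (m + 1)
  rw [res_succ, hm] at hb
  have hab : sig p S' a <+: sig p S' b := (List.prefix_append _ _).trans hb
  have hne : sig p S' a ≠ sig p S' b := by
    intro h
    have := hb.length_le
    rw [← h] at this
    simp at this
  obtain ⟨k, h1, h2⟩ := push hnil htree H b a hab hne
  have hfm : f m = en p S' (sig p S' a) k := by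
    have heq : sig p S' a ++ [f m] = sig p S' a ++ [en p S' (sig p S' a) k] :=
      (List.prefix_of_prefix_length_le hb h1 (by simp)).eq_of_length (by simp)
    simpa using (List.append_inj heq rfl).2
  set m' := (sig p S' (k :: a)).length with hm'
  have hmm' : m < m' := by
    have := sig_len_lt hnil htree H a k
    omega
  refine ⟨m', k :: a, hmm', ?_⟩
  obtain ⟨b', hb'⟩ := hf m'
  have hsb' : sig p S' a ++ [f m] <+: sig p S' b' := by
    have h3 : res f (m + 1) <+: res f m' := res_prefix f (by omega)
    rw [res_succ, hm] at h3
    exact h3.trans hb'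
  have hab' : sig p S' a <+: sig p S' b' := (List.prefix_append _ _).trans hsb'
  have hne' : sig p S' a ≠ sig p S' b' := by
    intro h
    have := hsb'.length_le
    rw [← h] at this
    simp at this
  obtain ⟨k', h1', h2'⟩ := push hnil htree H b' a hab' hne'
  have hkeq : en p S' (sig p S' a) k' = en p S' (sig p S' a) k := by
    have heq : sig p S' a ++ [f m] = sig p S' a ++ [en p S' (sig p S' a) k'] :=
      (List.prefix_of_prefix_length_le hsb' h1' (by simp)).eq_of_length (by simp)
    have := (List.append_inj heq rfl).2
    simp at this
    rw [← this, hfm]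
  have hk'k : k' = k := en_inj (sig_good hnil htree H a).2 hkeq
  rw [hk'k] at h2'
  exact (List.prefix_of_prefix_length_le hb' h2' (by simp [res_length, hm'])).eq_of_length
    (by simp [res_length, hm'])

theorem branch_unbounded (hnil : [] ∈ p) (htree : IsTree p)
    (H : ∀ s ∈ p, ∃ t ∈ p, s <+: t ∧ (sucT p t ∩ S').Infinite) {f : ℕ → ℕ}
    (hf : IsBranch (qt p S') f) :
    ∀ N, ∃ m, N < m ∧ ∃ a, res f m = sig p S' a := by
  intro N
  induction N with
  | zero =>
    obtain ⟨m', a', hm', ha'⟩ := branch_step hnil htree H hf (branch_base hnil htree H hf)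
    exact ⟨m', by omega, a', ha'⟩
  | succ N ih =>
    obtain ⟨m, hNm, a, ha⟩ := ih
    by_cases h : N + 1 < m
    · exact ⟨m, h, a, ha⟩
    · have hm : m = N + 1 := by omega
      obtain ⟨m', a', hm', ha'⟩ := branch_step hnil htree H hf ha
      exact ⟨m', by omega, a', ha'⟩

theorem main_lemma (hnil : [] ∈ p) (htree : IsTree p)
    (hchain : ∀ s ∈ p, List.Chain' (· < ·) s)
    (H : ∀ s ∈ p, ∃ t ∈ p, s <+: t ∧ (sucT p t ∩ S').Infinite) :
    ∃ q, IsMiller q ∧ q ⊆ p ∧ ∀ X ∈ splitSets q, X.Infinite ∧ X ⊆ S' := by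
  refine ⟨qt p S', qt_miller hnil htree hchain H, qt_sub htree hnil H, ?_⟩
  rintro X ⟨f, hf, rfl⟩
  -- f is strictly monotone
  have hmono : StrictMono f := by
    intro i j hij
    have hq : res f (j + 1) ∈ p := qt_sub htree hnil H (hf (j + 1))
    have hpw : List.Pairwise (fun u v => f u < f v) (List.range (j + 1)) :=
      List.pairwise_map.mp (List.isChain_iff_pairwise.mp (hchain _ hq))
    have := List.pairwise_iff_get.mp hpw ⟨i, by simp; omega⟩ ⟨j, by simp⟩ (by simpa)
    simpa using this
  constructor
  · -- Sp (qt p S') f is infinite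
    have himg : Sp (qt p S') f = f '' {n | res f n ∈ SplitNodes (qt p S')} := by
      ext m
      constructor
      · rintro ⟨n, hn, rfl⟩; exact ⟨n, hn, rfl⟩
      · rintro ⟨n, hn, rfl⟩; exact ⟨n, hn, rfl⟩
    rw [himg]
    apply Set.Infinite.image (hmono.injective.injOn)
    apply Set.Infinite.mono (s := {n | ∃ a, res f n = sig p S' a})
    · intro n hn
      obtain ⟨a, ha⟩ := hn
      show res f n ∈ SplitNodes (qt p S')
      rw [ha]
      exact ⟨mem_qt_self a, suc_qt_infinite hnil htree H a⟩
    · apply Set.infinite_of_not_bddAbove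
      rintro ⟨B, hB⟩
      obtain ⟨m, hBm, a, ha⟩ := branch_unbounded hnil htree H hf B
      exact absurd (hB ⟨a, ha⟩) (by omega)
  · -- Sp (qt p S') f ⊆ S'
    rintro m ⟨n, ⟨hnq, hninf⟩, rfl⟩
    obtain ⟨a, ha⟩ := split_ran hnil htree H hnq hninf
    have hsuc : f n ∈ sucT (qt p S') (sig p S' a) := by
      show sig p S' a ++ [f n] ∈ qt p S'
      rw [ha, ← res_succ]
      exact hf (n + 1)
    exact suc_qt_sub hnil htree H a hsuc


end Main

end Stmt10

/-- For every Miller tree `p` and infinite `S ⊆ ω` there is a Miller subtree `q ≤ p`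
with `[q]_split ⊆ [S]^ω` or `[q]_split ⊆ [ω∖S]^ω`. -/
theorem stmt10 (p : Set (List ℕ)) (hp : IsMiller p) (S : Set ℕ) (hS : S.Infinite) :
    ∃ q, IsMiller q ∧ q ⊆ p ∧
      ((∀ X ∈ splitSets q, X.Infinite ∧ X ⊆ S) ∨
       (∀ X ∈ splitSets q, X.Infinite ∧ X ⊆ Set.univ \ S)) := by
  obtain ⟨hne, htree, hchain, hsplit⟩ := hp
  have hnil : [] ∈ p := by
    obtain ⟨s, hs⟩ := hne
    exact htree s hs [] (List.nil_prefix)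
  by_cases h1 : ∀ s ∈ p, ∃ t ∈ p, s <+: t ∧ (sucT p t ∩ S).Infinite
  · obtain ⟨q, hq, hqp, hX⟩ := Stmt10.main_lemma hnil htree hchain h1
    exact ⟨q, hq, hqp, Or.inl hX⟩
  · push_neg at h1
    obtain ⟨s₀, hs₀, hbad⟩ := h1
    set p' : Set (List ℕ) := {s | s ∈ p ∧ (s <+: s₀ ∨ s₀ <+: s)} with hp'
    have hp'sub : p' ⊆ p := fun s hs => hs.1
    have hnil' : [] ∈ p' := ⟨hnil, Or.inl List.nil_prefix⟩
    have htree' : IsTree p' := by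
      rintro s ⟨hsp, hscomp⟩ t hts
      refine ⟨htree s hsp t hts, ?_⟩
      rcases hscomp with h | h
      · exact Or.inl (hts.trans h)
      · rcases List.prefix_or_prefix_of_prefix hts h with h'' | h''
        · exact Or.inl h''
        · exact Or.inr h''
    have hchain' : ∀ s ∈ p', List.Chain' (· < ·) s := fun s hs => hchain s hs.1
    have H' : ∀ s ∈ p', ∃ t ∈ p', s <+: t ∧ (sucT p' t ∩ (Set.univ \ S)).Infinite := by
      rintro s ⟨hsp, hscomp⟩
      -- pick u extending s₀ (and s)
      obtain ⟨u, hu, hsu, hs₀u⟩ : ∃ u ∈ p, s <+: u ∧ s₀ <+: u := by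
        rcases hscomp with h | h
        · exact ⟨s₀, hs₀, h, List.prefix_refl _⟩
        · exact ⟨s, hsp, List.prefix_refl _, h⟩
      obtain ⟨t, ht, hut, htinf⟩ := hsplit u hu
      have hs₀t : s₀ <+: t := hs₀u.trans hut
      have htp' : t ∈ p' := ⟨ht, Or.inr hs₀t⟩
      have hsucEq : sucT p' t = sucT p t := by
        ext n
        constructor
        · rintro ⟨h, _⟩; exact h
        · intro h; exact ⟨h, Or.inr (hs₀t.trans (List.prefix_append _ _))⟩
      have hfin : (sucT p t ∩ S).Finite := hbad t ht hs₀t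
      refine ⟨t, htp', hsu.trans hut, ?_⟩
      rw [hsucEq]
      have hEq : sucT p t ∩ (Set.univ \ S) = sucT p t \ (sucT p t ∩ S) := by
        ext n
        simp only [Set.mem_inter_iff, Set.mem_diff, Set.mem_univ, true_and]
        tauto
      rw [hEq]
      exact htinf.diff hfin
    obtain ⟨q, hq, hqp', hX⟩ := Stmt10.main_lemma hnil' htree' hchain' H'
    exact ⟨q, hq, hqp'.trans hp'sub, Or.inr hX⟩
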